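/- Let M ∈ ℕ, τ_0 := 0 and τ_m := 2^m for m ∈ {1,…,M}, and T := τ_M. Let F be a set of functions X → [0,1] containing f⋆, and let x_t ∈ X, y_t ∈ [0,1], Q_t ∈ {0,1} for t ∈ [T] be given. Set M_t(f) := Q_t·((f(x_t) − y_t)² − (f⋆(x_t) − y_t)²), and let e_t : F → [0, ∞) be nonnegative functions. Assume, for a constant C > 0, that for every f ∈ F and every 1 ≤ τ ≤ τ′ ≤ T: Σ_{t=τ}^{τ′} M_t(f) ≤ (3/2)·Σ_{t=τ}^{τ′} e_t(f) + C and Σ_{t=τ}^{τ′} e_t(f) ≤ 2·Σ_{t=τ}^{τ′} M_t(f) + C. Define R̂_m(f) := Σ_{t=1}^{τ_{m−1}} Q_t(f(x_t) − y_t)², let f̂_m ∈ F be a minimizer of R̂_m over F (assumed to exist), set β_m := (M − m + 1)·C, and F_m := {f ∈ F : R̂_m(f) ≤ R̂_m(f̂_m) + β_m}. Then: (1) f⋆ ∈ F_m for every m ∈ [M]; (2) Σ_{t=1}^{τ_{m−1}} e_t(f) ≤ 2β_m + C for every f ∈ F_m; (3) F_{m+1} ⊆ F_m for every m ∈ [M−1].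 -/

import Mathlib

/-- Deterministic properties of the epoch-wise active sets of the main algorithm, on the
concentration event.  Epochs have endpoints `τ_0 = 0`, `τ_m = 2^m`, `T = 2^M`;
`M_t(f) = Q_t·((f(x_t) - y_t)² - (f⋆(x_t) - y_t)²)`; `e_t : F → [0, ∞)` are nonnegative
(standing for the conditional expectations `E[M_t(f) | 𝔉_{t-1}]`) and are assumed to
satisfy the two-sided concentration inequalities with constant `C`.
`R̂_m(f) = Σ_{t=1}^{τ_{m-1}} Q_t (f(x_t) - y_t)²`, `f̂_m` minimizes `R̂_m` over `F`,
`β_m = (M - m + 1)·C`, and `F_m = {f ∈ F | R̂_m(f) ≤ R̂_m(f̂_m) + β_m}`.  Then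
(1) `f⋆ ∈ F_m` for every `m ∈ [M]`;
(2) `Σ_{t=1}^{τ_{m-1}} e_t(f) ≤ 2β_m + C` for every `f ∈ F_m`, `m ∈ [M]`;
(3) `F_{m+1} ⊆ F_m` for every `m ∈ [M-1]`. -/
theorem stmt_9 {X : Type*} (F : Set (X → ℝ)) (fstar : X → ℝ) (hstar : fstar ∈ F)
    (hFb : ∀ f ∈ F, ∀ z, f z ∈ Set.Icc (0 : ℝ) 1)
    (M : ℕ) (hM : 1 ≤ M)
    (x : ℕ → X) (y Q : ℕ → ℝ) (hy : ∀ t, y t ∈ Set.Icc (0 : ℝ) 1)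
    (hQ : ∀ t, Q t = 0 ∨ Q t = 1)
    (e : ℕ → (X → ℝ) → ℝ) (he : ∀ t f, 0 ≤ e t f)
    (C : ℝ) (hC : 0 < C)
    (hconc : ∀ f ∈ F, ∀ τ τ' : ℕ, 1 ≤ τ → τ ≤ τ' → τ' ≤ 2 ^ M →
      ((∑ t ∈ Finset.Icc τ τ',
          Q t * ((f (x t) - y t) ^ 2 - (fstar (x t) - y t) ^ 2))
        ≤ (3 / 2) * (∑ t ∈ Finset.Icc τ τ', e t f) + C)
      ∧ ((∑ t ∈ Finset.Icc τ τ', e t f)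
        ≤ 2 * (∑ t ∈ Finset.Icc τ τ',
            Q t * ((f (x t) - y t) ^ 2 - (fstar (x t) - y t) ^ 2)) + C))
    (tau : ℕ → ℕ) (htau0 : tau 0 = 0) (htau : ∀ m, 1 ≤ m → tau m = 2 ^ m)
    (Rhat : ℕ → (X → ℝ) → ℝ)
    (hRhat : ∀ m f,
      Rhat m f = ∑ t ∈ Finset.Icc 1 (tau (m - 1)), Q t * (f (x t) - y t) ^ 2)
    (fhat : ℕ → (X → ℝ)) (hfhatF : ∀ m, fhat m ∈ F)
    (hfhatmin : ∀ m, ∀ f ∈ F, Rhat m (fhat m) ≤ Rhat m f)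
    (beta : ℕ → ℝ) (hbeta : ∀ m, beta m = ((M - m + 1 : ℕ) : ℝ) * C)
    (Fm : ℕ → Set (X → ℝ))
    (hFm : ∀ m, Fm m = {f ∈ F | Rhat m f ≤ Rhat m (fhat m) + beta m}) :
    (∀ m, 1 ≤ m → m ≤ M → fstar ∈ Fm m)
    ∧ (∀ m, 1 ≤ m → m ≤ M → ∀ f ∈ Fm m,
        (∑ t ∈ Finset.Icc 1 (tau (m - 1)), e t f) ≤ 2 * beta m + C)
    ∧ (∀ m, 1 ≤ m → m ≤ M - 1 → Fm (m + 1) ⊆ Fm m) := by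
  have hsum : ∀ f : X → ℝ, ∀ n : ℕ,
      ∑ t ∈ Finset.Icc 1 n, Q t * ((f (x t) - y t) ^ 2 - (fstar (x t) - y t) ^ 2)
        = (∑ t ∈ Finset.Icc 1 n, Q t * (f (x t) - y t) ^ 2)
          - ∑ t ∈ Finset.Icc 1 n, Q t * (fstar (x t) - y t) ^ 2 := by
    intro f n
    rw [← Finset.sum_sub_distrib]
    exact Finset.sum_congr rfl fun t _ => by ring
  have htaub : ∀ k, k ≤ M → tau k ≤ 2 ^ M := by
    intro k hk
    rcases Nat.eq_zero_or_pos k with h | h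
    · simp [h, htau0]
    · rw [htau k h]; exact Nat.pow_le_pow_right (by norm_num) hk
  have hlow : ∀ f ∈ F, ∀ a b : ℕ, 1 ≤ a → b ≤ 2 ^ M →
      -(C / 2) ≤ ∑ t ∈ Finset.Icc a b,
        Q t * ((f (x t) - y t) ^ 2 - (fstar (x t) - y t) ^ 2) := by
    intro f hf a b ha hb
    by_cases hab : a ≤ b
    · have h := (hconc f hf a b ha hab hb).2
      have he0 : 0 ≤ ∑ t ∈ Finset.Icc a b, e t f := Finset.sum_nonneg fun t _ => he t f
      linarith
    · rw [Finset.Icc_eq_empty hab]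
      simp
      linarith
  have hEbd : ∀ f ∈ F, ∀ b : ℕ, b ≤ 2 ^ M →
      (∑ t ∈ Finset.Icc 1 b, e t f)
        ≤ 2 * (∑ t ∈ Finset.Icc 1 b,
            Q t * ((f (x t) - y t) ^ 2 - (fstar (x t) - y t) ^ 2)) + C := by
    intro f hf b hb
    rcases Nat.eq_zero_or_pos b with h | h
    · subst h; simp; linarith
    · exact (hconc f hf 1 b le_rfl h hb).2
  have hbetaC : ∀ m, C ≤ beta m := by
    intro m
    rw [hbeta m]
    have h1 : (1:ℝ) ≤ ((M - m + 1 : ℕ) : ℝ) := by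
      exact_mod_cast Nat.le_add_left 1 (M - m)
    nlinarith
  have hstarbd : ∀ m, 1 ≤ m → m ≤ M → Rhat m fstar ≤ Rhat m (fhat m) + C / 2 := by
    intro m hm1 hmM
    have hb : tau (m - 1) ≤ 2 ^ M := htaub (m - 1) (le_trans (Nat.sub_le m 1) hmM)
    have h := hlow (fhat m) (hfhatF m) 1 (tau (m - 1)) le_rfl hb
    rw [hsum] at h
    rw [hRhat m fstar, hRhat m (fhat m)]
    linarith
  refine ⟨?_, ?_, ?_⟩
  · intro m hm1 hmM
    rw [hFm]
    exact ⟨hstar, by linarith [hstarbd m hm1 hmM, hbetaC m]⟩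
  · intro m hm1 hmM f hf
    rw [hFm] at hf
    obtain ⟨hfF, hfR⟩ := hf
    have hb : tau (m - 1) ≤ 2 ^ M := htaub (m - 1) (le_trans (Nat.sub_le m 1) hmM)
    have h := hEbd f hfF (tau (m - 1)) hb
    rw [hsum, ← hRhat m f, ← hRhat m fstar] at h
    have hmin := hfhatmin m fstar hstar
    linarith
  · intro m hm1 hmM f hf
    rw [hFm] at hf ⊢
    obtain ⟨hfF, hfR⟩ := hf
    have hm1M : m + 1 ≤ M := by omega
    have hmM : m ≤ M := by omega
    refine ⟨hfF, ?_⟩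
    have htmono : tau (m - 1) ≤ tau m := by
      rw [htau m hm1]
      rcases Nat.eq_zero_or_pos (m - 1) with h | h
      · rw [h, htau0]; exact Nat.zero_le _
      · rw [htau _ h]; exact Nat.pow_le_pow_right (by norm_num) (Nat.sub_le m 1)
    have hIcc : ∀ n : ℕ, Finset.Icc 1 n = Finset.Ioc 0 n := fun n => Finset.Icc_add_one_left_eq_Ioc 0 n
    have hsplit := Finset.sum_Ioc_consecutive
      (fun t => Q t * ((f (x t) - y t) ^ 2 - (fstar (x t) - y t) ^ 2))
      (Nat.zero_le (tau (m - 1))) htmono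
    rw [← hIcc (tau (m - 1)), ← hIcc (tau m)] at hsplit
    have htail := hlow f hfF (tau (m - 1) + 1) (tau m) (Nat.le_add_left 1 _) (htaub m hmM)
    rw [Finset.Icc_add_one_left_eq_Ioc] at htail
    have h3 : m + 1 - 1 = m := by omega
    have h2 := hfhatmin (m + 1) fstar hstar
    rw [hRhat (m + 1) f, h3] at hfR
    rw [hRhat (m + 1) fstar, h3] at h2
    have h1 := hsum f (tau m)
    have h0 := hsum f (tau (m - 1))
    have hbeq : beta (m + 1) + C = beta m := by
      rw [hbeta (m + 1), hbeta m]
      have hnat : M - (m + 1) + 1 + 1 = M - m + 1 := by omega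
      have hc : ((M - (m + 1) + 1 : ℕ) : ℝ) + 1 = ((M - m + 1 : ℕ) : ℝ) := by
        rw [← hnat]; push_cast; ring
      nlinarith
    have h4 := hstarbd m hm1 hmM
    rw [hRhat m fstar, hRhat m (fhat m)] at h4
    rw [hRhat m f, hRhat m (fhat m)]
    linarith
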